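/- For every natural number J with J ≡ 2 (mod 6) and J ≥ 14, there exists a J×L protograph P with 6·L = J·(J−2) such that P is (3,(J−2)/2)-regular (every column sums to 3 and every row sums to (J−2)/2), P has exactly J−2 entries equal to 2, and P avoids inevitable cycles of length less than 14, i.e., P contains none of the ICI patterns of length 6, 8, 10, or 12 (nor their transposes). -/

import Mathlib

open Matrix Finset

/-- `P` has `Q` as a (row/column-permuted) entrywise sub-pattern. -/
def containsSub {J L m n : ℕ} (P : Matrix (Fin J) (Fin L) ℕ)
    (Q : Matrix (Fin m) (Fin n) ℕ) : Prop :=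
  ∃ r : Fin m → Fin J, ∃ c : Fin n → Fin L,
    Function.Injective r ∧ Function.Injective c ∧
    ∀ i j, Q i j ≤ P (r i) (c j)

/-- `P` contains the pattern `Q` or its transpose. -/
def containsPat {J L m n : ℕ} (P : Matrix (Fin J) (Fin L) ℕ)
    (Q : Matrix (Fin m) (Fin n) ℕ) : Prop :=
  containsSub P Q ∨ containsSub P Qᵀ

/-- ICI pattern of length 6. -/
def pat6 : Matrix (Fin 1) (Fin 1) ℕ := !![3]
/-- ICI pattern of length 8. -/
def pat8 : Matrix (Fin 1) (Fin 2) ℕ := !![2, 2]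
/-- ICI pattern of length 10. -/
def pat10 : Matrix (Fin 2) (Fin 2) ℕ := !![2, 1; 1, 1]
/-- First ICI pattern of length 12. -/
def pat12a : Matrix (Fin 2) (Fin 2) ℕ := !![2, 1; 0, 2]
/-- Second ICI pattern of length 12. -/
def pat12b : Matrix (Fin 2) (Fin 3) ℕ := !![2, 1, 1; 0, 1, 1]
/-- Third ICI pattern of length 12 (the 2×3 all-ones matrix). -/
def pat12c : Matrix (Fin 2) (Fin 3) ℕ := !![1, 1, 1; 1, 1, 1]

/-- `P` avoids inevitable cycles of length `< 10`. -/
def avoidsLt10 {J L : ℕ} (P : Matrix (Fin J) (Fin L) ℕ) : Prop :=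
  ¬ containsPat P pat6 ∧ ¬ containsPat P pat8

/-- `P` avoids inevitable cycles of length `< 12`. -/
def avoidsLt12 {J L : ℕ} (P : Matrix (Fin J) (Fin L) ℕ) : Prop :=
  avoidsLt10 P ∧ ¬ containsPat P pat10

/-- `P` avoids inevitable cycles of length `< 14`. -/
def avoidsLt14 {J L : ℕ} (P : Matrix (Fin J) (Fin L) ℕ) : Prop :=
  avoidsLt12 P ∧ ¬ containsPat P pat12a ∧ ¬ containsPat P pat12b ∧ ¬ containsPat P pat12c

/-- The number of entries of `P` equal to `2`. -/
def numTwos {J L : ℕ} (P : Matrix (Fin J) (Fin L) ℕ) : ℕ :=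
  (Finset.univ.filter (fun p : Fin J × Fin L => P p.1 p.2 = 2)).card

/-- `P` is `(d_v, d_c)`-regular: every column sums to `d_v`, every row to `d_c`. -/
def protoRegular {J L : ℕ} (P : Matrix (Fin J) (Fin L) ℕ) (dv dc : ℕ) : Prop :=
  (∀ l : Fin L, ∑ j : Fin J, P j l = dv) ∧ (∀ j : Fin J, ∑ l : Fin L, P j l = dc)


set_option synthInstance.maxHeartbeats 1000000
set_option maxHeartbeats 1000000
namespace Stmt12

variable {k : ℕ}

abbrev Z (k : ℕ) := ZMod (2*k+1)

def dd (j : Fin k) : Z k := (((j : ℕ) + 1 : ℕ) : Z k)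

lemma dd_val (j : Fin k) : (dd j).val = (j : ℕ) + 1 :=
  ZMod.val_cast_of_lt (by omega)

lemma dd_ne_zero (j : Fin k) : dd j ≠ 0 := by
  intro h
  have h2 := dd_val j
  rw [h, ZMod.val_zero] at h2
  omega

lemma neg_dd_val (j : Fin k) : (-dd j).val = 2*k+1 - ((j:ℕ)+1) := by
  rw [ZMod.neg_val, if_neg (dd_ne_zero j), dd_val]

lemma dd_inj {j j' : Fin k} (h : dd j = dd j') : j = j' := by
  have h2 := dd_val j
  rw [h, dd_val] at h2
  exact Fin.ext (by omega)

lemma dd_ne_neg (j j' : Fin k) : dd j ≠ -dd j' := by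
  intro h
  have h1 := dd_val j
  rw [h, neg_dd_val] at h1
  have := j.isLt
  have := j'.isLt
  omega

/-- Halving map in `Z k`. -/
def hf (a : Z k) : Z k := ((k+1 : ℕ) : Z k) * a

lemma two_mul_hf (a : Z k) : 2 * hf a = a := by
  have h0 : ((2*k+1 : ℕ) : Z k) = 0 := ZMod.natCast_self _
  have h1 : ((2*(k+1) : ℕ) : Z k) = 1 := by
    push_cast at h0 ⊢
    linear_combination h0
  calc 2 * hf a = ((2*(k+1) : ℕ) : Z k) * a := by unfold hf; push_cast; ring
  _ = a := by rw [h1, one_mul]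

lemma hf_two_mul (a : Z k) : hf (2 * a) = a := by
  have : hf (2*a) = 2 * hf a := by unfold hf; ring
  rw [this, two_mul_hf]

lemma two_mul_inj {a b : Z k} (h : 2*a = 2*b) : a = b := by
  rw [← hf_two_mul a, ← hf_two_mul b, h]

lemma two_mul_ne_zero {a : Z k} (ha : a ≠ 0) : 2*a ≠ 0 := by
  intro h
  exact ha (two_mul_inj (by rw [h, mul_zero]))

lemma hf_add (a b : Z k) : hf a + hf b = hf (a+b) := by unfold hf; ring
lemma hf_sub (a b : Z k) : hf a - hf b = hf (a-b) := by unfold hf; ring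
lemma hf_ne_zero {a : Z k} (ha : a ≠ 0) : hf a ≠ 0 := by
  intro h
  apply ha
  rw [← two_mul_hf a, h, mul_zero]

/-- Selecting the index of the difference (up to sign) of a nonzero element. -/
def jsel (hk : 1 ≤ k) (z : Z k) : Fin k :=
  if h : k + 1 ≤ z.val then ⟨2*k - z.val, by have := z.val_lt; omega⟩
  else ⟨z.val - 1, by have := z.val_lt; omega⟩

lemma jsel_spec (hk : 1 ≤ k) {z : Z k} (hz : z ≠ 0) :
    dd (jsel hk z) = z ∨ dd (jsel hk z) = -z := by
  have hv : z.val ≠ 0 := fun h => hz ((ZMod.val_eq_zero z).mp h)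
  have hlt := z.val_lt
  unfold jsel
  by_cases h : k + 1 ≤ z.val
  · right
    rw [dif_pos h]
    unfold dd
    simp only
    have h1 : (2*k - z.val) + 1 = (2*k+1) - z.val := by omega
    rw [h1]
    rw [Nat.cast_sub (le_of_lt hlt), ZMod.natCast_self, ZMod.natCast_zmod_val]
    ring
  · left
    rw [dif_neg h]
    unfold dd
    simp only
    have h1 : (z.val - 1) + 1 = z.val := by omega
    rw [h1, ZMod.natCast_zmod_val]

lemma jsel_of_dd (hk : 1 ≤ k) (j : Fin k) : jsel hk (dd j) = j := by
  have hv := dd_val j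
  have := j.isLt
  unfold jsel
  rw [dif_neg (by omega)]
  exact Fin.ext (by simp [hv])

lemma jsel_of_neg_dd (hk : 1 ≤ k) (j : Fin k) : jsel hk (-dd j) = j := by
  have hv := neg_dd_val j
  have := j.isLt
  unfold jsel
  rw [dif_pos (by omega)]
  exact Fin.ext (by simp [hv]; omega)

lemma jsel_unique (hk : 1 ≤ k) {z : Z k} {j : Fin k}
    (h : dd j = z ∨ dd j = -z) : j = jsel hk z := by
  rcases h with h | h
  · rw [← h, jsel_of_dd]
  · have : z = -dd j := by rw [h, neg_neg]
    rw [this, jsel_of_neg_dd]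

lemma jsel_filter_card (hk : 1 ≤ k) {z : Z k} (hz : z ≠ 0) :
    (Finset.univ.filter fun j : Fin k => dd j = z ∨ dd j = -z).card = 1 := by
  rw [Finset.card_eq_one]
  refine ⟨jsel hk z, ?_⟩
  ext j
  simp only [Finset.mem_filter, Finset.mem_univ, true_and, Finset.mem_singleton]
  constructor
  · exact jsel_unique hk
  · rintro rfl; exact jsel_spec hk hz


-- types
abbrev Pt (k : ℕ) := {x : Z k // x ≠ 0} × ZMod 3
abbrev TI (k : ℕ) := {x : Z k // x ≠ 0}

def IIok (t : ZMod 3 × Z k × Fin k) : Prop :=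
  t.2.1 ≠ 0 ∧ t.2.1 + dd t.2.2 ≠ 0 ∧ t.2.1 - dd t.2.2 ≠ 0

instance : DecidablePred (IIok (k := k)) := fun t => by
  unfold IIok; infer_instance

abbrev TII (k : ℕ) := {t : ZMod 3 × Z k × Fin k // IIok t}

abbrev Row (k : ℕ) := Pt k ⊕ Fin 2
abbrev Col (k : ℕ) := Pt k ⊕ (TI k ⊕ TII k)

def g (p : Pt k) : Fin 2 := if p.1.1.val ≤ k then 0 else 1

def memI (p : Pt k) (x : TI k) : Prop := p.1 = x

def memII (p : Pt k) (t : TII k) : Prop :=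
  (p.2 = t.1.1 ∧ ((p.1 : Z k) = t.1.2.1 + dd t.1.2.2 ∨ (p.1 : Z k) = t.1.2.1 - dd t.1.2.2))
  ∨ (p.2 = t.1.1 + 1 ∧ (p.1 : Z k) = t.1.2.1)

instance (p : Pt k) : Decidable (memI p x) := by unfold memI; infer_instance
instance (p : Pt k) (t : TII k) : Decidable (memII p t) := by unfold memII; infer_instance

def memT (p : Pt k) : TI k ⊕ TII k → Prop
  | .inl x => memI p x
  | .inr t => memII p t

instance (p : Pt k) (t : TI k ⊕ TII k) : Decidable (memT p t) := by
  cases t <;> (unfold memT; infer_instance)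

def E : Row k → Col k → ℕ
  | .inl p, .inl c => if p = c then 2 else 0
  | .inr u, .inl c => if g c = u then 1 else 0
  | .inl p, .inr t => if memT p t then 1 else 0
  | .inr _, .inr _ => 0

-- support lemmas
@[simp] lemma E_ll (p c : Pt k) : E (.inl p) (.inl c) = if p = c then 2 else 0 := rfl
@[simp] lemma E_rl (u : Fin 2) (c : Pt k) : E (.inr u) (.inl c) = if g c = u then 1 else 0 := rfl
@[simp] lemma E_lr (p : Pt k) (t : TI k ⊕ TII k) : E (.inl p) (.inr t) = if memT p t then 1 else 0 := rfl
@[simp] lemma E_rr (u : Fin 2) (t : TI k ⊕ TII k) : E (.inr u) (.inr t) = 0 := rfl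

lemma E_le_two (r : Row k) (c : Col k) : E r c ≤ 2 := by
  rcases r with p | u <;> rcases c with c0 | t <;> simp <;> split_ifs <;> omega

lemma E_two {r : Row k} {c : Col k} (h : 2 ≤ E r c) :
    ∃ p, r = .inl p ∧ c = .inl p := by
  rcases r with p | u <;> rcases c with c0 | t <;> simp at h
  · refine ⟨p, rfl, ?_⟩
    split_ifs at h with hh
    · rw [hh]
    · omega
  · split_ifs at h <;> omega
  · split_ifs at h <;> omega

lemma E_one_2col {r : Row k} {c0 : Pt k} (h : 1 ≤ E r (.inl c0)) :
    r = .inl c0 ∨ r = .inr (g c0) := by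
  rcases r with p | u <;> simp at h
  · left
    split_ifs at h with hh
    · rw [hh]
    · omega
  · right
    split_ifs at h with hh
    · rw [hh]
    · omega

lemma E_one_clean {u : Fin 2} {c : Col k} (h : 1 ≤ E (.inr u) c) :
    ∃ c0, c = .inl c0 ∧ g c0 = u := by
  rcases c with c0 | t <;> simp at h
  refine ⟨c0, rfl, ?_⟩
  split_ifs at h with hh
  · exact hh
  · omega

lemma E_one_2row2col {p c0 : Pt k} (h : 1 ≤ E (.inl p) (.inl c0)) : p = c0 := by
  simp at h
  split_ifs at h with hh
  · exact hh
  · omega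

lemma E_one_trip {p : Pt k} {t : TI k ⊕ TII k} (h : 1 ≤ E (.inl p) (.inr t)) : memT p t := by
  simp at h
  split_ifs at h with hh
  · exact hh
  · omega


-- linearity
lemma zmod3_cases : ∀ (a b : ZMod 3), a ≠ b → b = a + 1 ∨ a = b + 1 := by decide

lemma memII_same_z {p q : Pt k} {t : TII k} (hp : memII p t) (hq : memII q t)
    (h1 : (p.1 : Z k) = (q.1 : Z k)) : p = q := by
  have h1' : p.1 = q.1 := Subtype.ext h1
  rcases hp with ⟨hpl, hpz⟩ | ⟨hpl, hpz⟩ <;> rcases hq with ⟨hql, hqz⟩ | ⟨hql, hqz⟩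
  · exact Prod.ext h1' (by rw [hpl, hql])
  · exfalso
    have hw : (p.1 : Z k) = t.1.2.1 := h1.trans hqz
    rcases hpz with h | h
    · exact dd_ne_zero t.1.2.2 (by
        have : t.1.2.1 + dd t.1.2.2 = t.1.2.1 := by rw [← h, hw]
        exact (add_eq_left).mp this)
    · exact dd_ne_zero t.1.2.2 (by
        have : t.1.2.1 - dd t.1.2.2 = t.1.2.1 := by rw [← h, hw]
        have h2 := (sub_eq_self).mp this
        simpa using h2)
  · exfalso
    have hw : (q.1 : Z k) = t.1.2.1 := h1.symm.trans hpz
    rcases hqz with h | h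
    · exact dd_ne_zero t.1.2.2 (by
        have : t.1.2.1 + dd t.1.2.2 = t.1.2.1 := by rw [← h, hw]
        exact (add_eq_left).mp this)
    · exact dd_ne_zero t.1.2.2 (by
        have : t.1.2.1 - dd t.1.2.2 = t.1.2.1 := by rw [← h, hw]
        have h2 := (sub_eq_self).mp this
        simpa using h2)
  · exact Prod.ext h1' (by rw [hpl, hql])

lemma shape_same_level (hk : 1 ≤ k) {p q : Pt k} {t : TII k}
    (hz : (p.1 : Z k) ≠ (q.1 : Z k)) (hl : p.2 = q.2)
    (hp : memII p t) (hq : memII q t) :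
    t.1.1 = p.2 ∧ t.1.2.1 = hf ((p.1 : Z k) + (q.1 : Z k)) ∧
      t.1.2.2 = jsel hk (hf ((p.1 : Z k) - (q.1 : Z k))) := by
  obtain ⟨⟨i, w, j⟩, hok⟩ := t
  simp only [memII] at hp hq
  simp only
  rcases hp with ⟨hpl, hpz⟩ | ⟨hpl, hpz⟩ <;> rcases hq with ⟨hql, hqz⟩ | ⟨hql, hqz⟩
  · refine ⟨hpl.symm, ?_, ?_⟩
    · rcases hpz with h | h <;> rcases hqz with h' | h'
      · exact absurd (h.trans h'.symm) hz
      · rw [h, h']; rw [show w + dd j + (w - dd j) = 2*w by ring, hf_two_mul]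
      · rw [h, h']; rw [show w - dd j + (w + dd j) = 2*w by ring, hf_two_mul]
      · exact absurd (h.trans h'.symm) hz
    · rcases hpz with h | h <;> rcases hqz with h' | h'
      · exact absurd (h.trans h'.symm) hz
      · apply jsel_unique
        left
        rw [h, h', show w + dd j - (w - dd j) = 2 * dd j by ring, hf_two_mul]
      · apply jsel_unique
        right
        rw [h, h', show w - dd j - (w + dd j) = 2 * (-dd j) by ring, hf_two_mul, neg_neg]
      · exact absurd (h.trans h'.symm) hz
  · exfalso
    have : i = i + 1 := hpl.symm.trans (hl.trans hql)
    exact one_ne_zero (left_eq_add.mp this)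
  · exfalso
    have : i = i + 1 := hql.symm.trans (hl.symm.trans hpl)
    exact one_ne_zero (left_eq_add.mp this)
  · exact absurd (hpz.trans hqz.symm) hz

lemma shape_diff_level (hk : 1 ≤ k) {p q : Pt k} {t : TII k}
    (hz : (p.1 : Z k) ≠ (q.1 : Z k)) (hl : q.2 = p.2 + 1)
    (hp : memII p t) (hq : memII q t) :
    t.1.1 = p.2 ∧ t.1.2.1 = (q.1 : Z k) ∧
      t.1.2.2 = jsel hk ((p.1 : Z k) - (q.1 : Z k)) := by
  obtain ⟨⟨i, w, j⟩, hok⟩ := t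
  simp only [memII] at hp hq
  simp only
  rcases hp with ⟨hpl, hpz⟩ | ⟨hpl, hpz⟩ <;> rcases hq with ⟨hql, hqz⟩ | ⟨hql, hqz⟩
  · exfalso
    have : i = i + 1 := hql.symm.trans (hl.trans (show p.2 + 1 = i + 1 by rw [hpl]))
    exact one_ne_zero (left_eq_add.mp this)
  · refine ⟨hpl.symm, hqz.symm, ?_⟩
    rcases hpz with h | h
    · apply jsel_unique
      left
      rw [h, hqz]
      ring
    · apply jsel_unique
      right
      rw [h, hqz]
      ring
  · exfalso
    have h0 : i = i + 1 + 1 := hql.symm.trans (hl.trans (by rw [hpl]))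
    rw [add_assoc] at h0
    exact absurd (left_eq_add.mp h0) (by decide)
  · exact absurd (hpz.trans hqz.symm) hz

lemma linearity (hk : 1 ≤ k) {t t' : TI k ⊕ TII k} {p q : Pt k} (hpq : p ≠ q)
    (h1 : memT p t) (h2 : memT q t) (h3 : memT p t') (h4 : memT q t') : t = t' := by
  rcases t with x | tt <;> rcases t' with x' | tt'
  · simp only [memT, memI] at h1 h3
    rw [← h1, ← h3]
  · exfalso
    simp only [memT, memI] at h1 h2 h3 h4
    have : (p.1 : Z k) = (q.1 : Z k) := by rw [h1.trans h2.symm]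
    exact hpq (memII_same_z h3 h4 this)
  · exfalso
    simp only [memT, memI] at h1 h2 h3 h4
    have : (p.1 : Z k) = (q.1 : Z k) := by rw [h3.trans h4.symm]
    exact hpq (memII_same_z h1 h2 this)
  · simp only [memT] at h1 h2 h3 h4
    by_cases hzz : (p.1 : Z k) = (q.1 : Z k)
    · exact absurd (memII_same_z h1 h2 hzz) hpq
    congr 1
    apply Subtype.ext
    by_cases hll : p.2 = q.2
    · obtain ⟨a1, a2, a3⟩ := shape_same_level hk hzz hll h1 h2
      obtain ⟨b1, b2, b3⟩ := shape_same_level hk hzz hll h3 h4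
      exact Prod.ext (a1.trans b1.symm) (Prod.ext (a2.trans b2.symm) (a3.trans b3.symm))
    · rcases zmod3_cases _ _ hll with hc | hc
      · obtain ⟨a1, a2, a3⟩ := shape_diff_level hk hzz hc h1 h2
        obtain ⟨b1, b2, b3⟩ := shape_diff_level hk hzz hc h3 h4
        exact Prod.ext (a1.trans b1.symm) (Prod.ext (a2.trans b2.symm) (a3.trans b3.symm))
      · have hzz' : (q.1 : Z k) ≠ (p.1 : Z k) := fun h => hzz h.symm
        obtain ⟨a1, a2, a3⟩ := shape_diff_level hk hzz' hc h2 h1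
        obtain ⟨b1, b2, b3⟩ := shape_diff_level hk hzz' hc h4 h3
        exact Prod.ext (a1.trans b1.symm) (Prod.ext (a2.trans b2.symm) (a3.trans b3.symm))


-- column sums
lemma colSum (c : Col k) : ∑ r : Row k, E r c = 3 := by
  rw [Fintype.sum_sum_type]
  rcases c with c0 | t
  · have h1 : ∑ p : Pt k, E (Sum.inl p) (Sum.inl c0) = 2 := by
      simp only [E_ll]
      rw [Finset.sum_ite_eq' Finset.univ c0 (fun _ => 2)]
      simp
    have h2 : ∑ u : Fin 2, E (Sum.inr u) (Sum.inl c0) = 1 := by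
      simp only [E_rl]
      rw [Finset.sum_ite_eq Finset.univ (g c0) (fun _ => 1)]
      simp
    rw [h1, h2]
  · have h2 : ∑ u : Fin 2, E (Sum.inr u) (Sum.inr t) = 0 := by simp
    rw [h2, add_zero]
    rcases t with x | tt
    · simp only [E_lr, memT, memI]
      rw [Fintype.sum_prod_type]
      have h3 : ∀ a : TI k, (∑ _i : ZMod 3, if a = x then (1:ℕ) else 0) = if a = x then 3 else 0 := by
        intro a
        split_ifs <;> simp [Finset.card_univ]
      have h4 : ∀ a : TI k, (∑ _i : ZMod 3, if (a : TI k) = x then (1:ℕ) else 0)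
          = (fun a : TI k => if a = x then (3:ℕ) else 0) a := fun a => h3 a
      calc (∑ a : TI k, ∑ _i : ZMod 3, if a = x then (1:ℕ) else 0)
          = ∑ a : TI k, (if a = x then (3:ℕ) else 0) := Finset.sum_congr rfl (fun a _ => h3 a)
        _ = 3 := by rw [Finset.sum_ite_eq' Finset.univ x (fun _ => 3)]; simp
    · obtain ⟨⟨i, w, j⟩, hok⟩ := tt
      simp only [E_lr, memT]
      rw [Finset.sum_boole]
      have a1 : Pt k := (⟨w + dd j, hok.2.1⟩, i)
      set A1 : Pt k := (⟨w + dd j, hok.2.1⟩, i) with hA1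
      set A2 : Pt k := (⟨w - dd j, hok.2.2⟩, i) with hA2
      set A3 : Pt k := (⟨w, hok.1⟩, i+1) with hA3
      have hfe : (Finset.univ.filter fun p : Pt k => memII p ⟨(i,w,j),hok⟩) = {A1, A2, A3} := by
        ext p
        rw [Finset.mem_filter]
        simp only [Finset.mem_filter, Finset.mem_univ, true_and, Finset.mem_insert,
          Finset.mem_singleton, memII]
        constructor
        · rintro (⟨hl, hz | hz⟩ | ⟨hl, hz⟩)
          · left; exact Prod.ext (Subtype.ext hz) hl
          · right; left; exact Prod.ext (Subtype.ext hz) hl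
          · right; right; exact Prod.ext (Subtype.ext hz) hl
        · rintro (rfl | rfl | rfl)
          · exact Or.inl ⟨rfl, Or.inl rfl⟩
          · exact Or.inl ⟨rfl, Or.inr rfl⟩
          · exact Or.inr ⟨rfl, rfl⟩
      have h12 : A1 ≠ A2 := by
        intro h
        have h2 : w + dd j = w - dd j := by
          have := congrArg (fun p : Pt k => (p.1 : Z k)) h
          simpa [hA1, hA2] using this
        have h3 : 2 * dd j = 0 := by linear_combination h2
        exact two_mul_ne_zero (dd_ne_zero j) h3
      have h13 : A1 ≠ A3 := by
        intro h
        have h2 : i = i + 1 := congrArg Prod.snd h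
        exact one_ne_zero (left_eq_add.mp h2)
      have h23 : A2 ≠ A3 := by
        intro h
        have h2 : i = i + 1 := congrArg Prod.snd h
        exact one_ne_zero (left_eq_add.mp h2)
      rw [hfe]
      rw [Finset.card_insert_of_notMem (by simp [h12, h13]),
        Finset.card_insert_of_notMem (by simp [h23]), Finset.card_singleton]
      norm_num

-- fibers of g
lemma gfiber (hk : 1 ≤ k) (u : Fin 2) :
    (Finset.univ.filter fun p : Pt k => g p = u).card = 3*k := by
  have hcardt : (Finset.univ : Finset (Fin k × ZMod 3)).card = 3*k := by
    simp [Finset.card_univ, mul_comm]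
  fin_cases u
  · rw [← hcardt]
    refine Finset.card_bij'
      (fun p (hp : p ∈ Finset.univ.filter fun p : Pt k => g p = 0) =>
        ((⟨p.1.1.val - 1, by
          have h1 : p.1.1.val ≤ k := by
            by_contra hc
            have h2 : g p = 1 := by unfold g; rw [if_neg hc]
            rw [Finset.mem_filter] at hp
            rw [hp.2] at h2
            exact absurd h2 (by decide)
          have h0 : p.1.1.val ≠ 0 := fun h => p.1.2 ((ZMod.val_eq_zero _).mp h)
          omega⟩ : Fin k), p.2))
      (fun q _ => ((⟨dd q.1, dd_ne_zero q.1⟩ : TI k), q.2))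
      (fun a ha => Finset.mem_univ _) (fun q hq => ?_) (fun p hp => ?_) (fun q hq => ?_)
    · rw [Finset.mem_filter]
      refine ⟨Finset.mem_univ _, ?_⟩
      unfold g
      have hv : (dd q.1).val ≤ k := by
        rw [dd_val]
        have := q.1.isLt
        omega
      rw [if_pos hv]
      rfl
    · rw [Finset.mem_filter] at hp
      have h0 : p.1.1.val ≠ 0 := fun h => p.1.2 ((ZMod.val_eq_zero _).mp h)
      refine Prod.ext (Subtype.ext ?_) rfl
      show (((p.1.1.val - 1) + 1 : ℕ) : Z k) = (p.1 : Z k)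
      have h1 : p.1.1.val - 1 + 1 = p.1.1.val := by omega
      rw [h1, ZMod.natCast_zmod_val]
    · refine Prod.ext (Fin.ext ?_) rfl
      show (dd q.1).val - 1 = (q.1 : ℕ)
      simp [dd_val]
  · rw [← hcardt]
    refine Finset.card_bij'
      (fun p (hp : p ∈ Finset.univ.filter fun p : Pt k => g p = 1) =>
        ((⟨(-(p.1 : Z k)).val - 1, by
          have hne : (p.1 : Z k) ≠ 0 := p.1.2
          have hv : (-(p.1 : Z k)).val = 2*k+1 - (p.1:Z k).val := by
            rw [ZMod.neg_val, if_neg hne]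
          have h1 : ¬ (p.1:Z k).val ≤ k := by
            by_contra hc
            have h2 : g p = 0 := by unfold g; rw [if_pos hc]
            rw [Finset.mem_filter] at hp
            rw [hp.2] at h2
            exact absurd h2 (by decide)
          have := ZMod.val_lt (p.1 : Z k)
          omega⟩ : Fin k), p.2))
      (fun q _ => ((⟨-dd q.1, neg_ne_zero.mpr (dd_ne_zero q.1)⟩ : TI k), q.2))
      (fun a ha => Finset.mem_univ _) (fun q hq => ?_) (fun p hp => ?_) (fun q hq => ?_)
    · rw [Finset.mem_filter]
      refine ⟨Finset.mem_univ _, ?_⟩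
      unfold g
      have hv : ¬ (-dd q.1).val ≤ k := by
        rw [neg_dd_val]
        have := q.1.isLt
        omega
      rw [if_neg hv]
      rfl
    · have hne : (p.1 : Z k) ≠ 0 := p.1.2
      refine Prod.ext (Subtype.ext ?_) rfl
      show -(((( -(p.1:Z k)).val - 1) + 1 : ℕ) : Z k) = (p.1 : Z k)
      have hnv : (-(p.1:Z k)).val ≠ 0 := by
        intro h
        rw [ZMod.val_eq_zero] at h
        exact hne (neg_eq_zero.mp h)
      have h1 : (-(p.1:Z k)).val - 1 + 1 = (-(p.1:Z k)).val := by omega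
      rw [h1, ZMod.natCast_zmod_val, neg_neg]
    · refine Prod.ext (Fin.ext ?_) rfl
      show (-(-dd q.1)).val - 1 = (q.1 : ℕ)
      rw [neg_neg, dd_val]
      omega


-- counting the type-II triples through a point
lemma cardB (hk : 1 ≤ k) (p : Pt k) :
    (Finset.univ.filter fun t : TII k =>
      p.2 = t.1.1 + 1 ∧ (p.1 : Z k) = t.1.2.1).card = k - 1 := by
  have hz : (p.1 : Z k) ≠ 0 := p.1.2
  have htarget : (Finset.univ.filter fun j : Fin k =>
      ¬(dd j = (p.1 : Z k) ∨ dd j = -(p.1 : Z k))).card = k - 1 := by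
    have h1 := Finset.card_filter_add_card_filter_not
      (s := (Finset.univ : Finset (Fin k)))
      (p := fun j : Fin k => dd j = (p.1 : Z k) ∨ dd j = -(p.1 : Z k))
    rw [jsel_filter_card hk hz] at h1
    simp only [Finset.card_univ, Fintype.card_fin] at h1
    omega
  rw [← htarget]
  refine Finset.card_bij'
    (fun t _ => t.1.2.2)
    (fun j (hj : j ∈ Finset.univ.filter fun j : Fin k =>
        ¬(dd j = (p.1 : Z k) ∨ dd j = -(p.1 : Z k))) =>
      (⟨(p.2 - 1, (p.1 : Z k), j), by
        rw [Finset.mem_filter] at hj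
        push_neg at hj
        refine ⟨hz, ?_, ?_⟩
        · intro h
          exact hj.2.2 (by linear_combination h)
        · intro h
          exact hj.2.1 (by linear_combination -h)⟩ : TII k))
    (fun t ht => ?_) (fun j hj => ?_) (fun t ht => ?_) (fun j hj => ?_)
  · rw [Finset.mem_filter] at ht ⊢
    obtain ⟨-, h1, h2⟩ := ht
    refine ⟨Finset.mem_univ _, ?_⟩
    obtain ⟨hw, hwp, hwm⟩ := t.2
    rintro (h | h)
    · have h' : dd t.1.2.2 = (p.1 : Z k) := h
      exact hwm (by rw [← h2]; linear_combination -h')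
    · have h' : dd t.1.2.2 = -(p.1 : Z k) := h
      exact hwp (by rw [← h2]; linear_combination h')
  · rw [Finset.mem_filter]
    exact ⟨Finset.mem_univ _, by rw [sub_add_cancel], rfl⟩
  · rw [Finset.mem_filter] at ht
    obtain ⟨-, h1, h2⟩ := ht
    apply Subtype.ext
    refine Prod.ext ?_ (Prod.ext ?_ rfl)
    · show p.2 - 1 = t.1.1
      rw [h1]
      ring
    · exact h2
  · rfl

lemma cardA (hk : 1 ≤ k) (p : Pt k) :
    (Finset.univ.filter fun t : TII k =>
      p.2 = t.1.1 ∧ ((p.1 : Z k) = t.1.2.1 + dd t.1.2.2 ∨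
        (p.1 : Z k) = t.1.2.1 - dd t.1.2.2)).card = 2*k - 2 := by
  set z : Z k := (p.1 : Z k) with hzdef
  have hz : z ≠ 0 := p.1.2
  have hznz : -z ≠ 0 := neg_ne_zero.mpr hz
  have hzneg : z ≠ -z := by
    intro h
    apply hz
    apply two_mul_inj
    rw [mul_zero]
    linear_combination h
  have htarget : (Finset.univ.filter fun y : Z k => ¬(y = 0 ∨ y = z ∨ y = -z)).card
      = 2*k - 2 := by
    have h2 : (Finset.univ.filter fun y : Z k => (y = 0 ∨ y = z ∨ y = -z)).card = 3 := by
      have hfe : (Finset.univ.filter fun y : Z k => (y = 0 ∨ y = z ∨ y = -z))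
          = {0, z, -z} := by
        ext y
        simp [Finset.mem_insert]
      rw [hfe]
      rw [Finset.card_insert_of_notMem (by simp [Ne.symm hz, Ne.symm hznz]),
        Finset.card_insert_of_notMem (by simp [hzneg]), Finset.card_singleton]
    have h1 := Finset.card_filter_add_card_filter_not
      (s := (Finset.univ : Finset (Z k)))
      (p := fun y : Z k => (y = 0 ∨ y = z ∨ y = -z))
    rw [h2] at h1
    simp only [Finset.card_univ, ZMod.card] at h1
    omega
  rw [← htarget]
  refine Finset.card_bij'
    (fun t _ => 2 * t.1.2.1 - z)
    (fun y (hy : y ∈ Finset.univ.filter fun y : Z k => ¬(y = 0 ∨ y = z ∨ y = -z)) =>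
      (⟨(p.2, hf (z + y), jsel hk (hf (z - y))), by
        rw [Finset.mem_filter] at hy
        push_neg at hy
        obtain ⟨-, hy0, hyz, hynz⟩ := hy
        have he : hf (z - y) ≠ 0 := hf_ne_zero (sub_ne_zero.mpr (Ne.symm hyz))
        have hw : hf (z + y) ≠ 0 := by
          apply hf_ne_zero
          intro h
          exact hynz (by linear_combination h)
        have hsum : hf (z + y) + hf (z - y) = z := by
          rw [hf_add, show (z + y) + (z - y) = 2*z by ring, hf_two_mul]
        have hdiff : hf (z + y) - hf (z - y) = y := by
          rw [hf_sub, show (z + y) - (z - y) = 2*y by ring, hf_two_mul]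
        refine ⟨hw, ?_, ?_⟩
        · show hf (z + y) + dd (jsel hk (hf (z - y))) ≠ 0
          rcases jsel_spec hk he with h | h <;> rw [h]
          · rw [hsum]; exact hz
          · intro hc
            apply hy0
            rw [← hdiff]
            linear_combination hc
        · show hf (z + y) - dd (jsel hk (hf (z - y))) ≠ 0
          rcases jsel_spec hk he with h | h <;> rw [h]
          · rw [hdiff]; exact hy0
          · intro hc
            apply hz
            rw [← hsum]
            linear_combination hc⟩ : TII k))
    (fun t ht => ?_) (fun y hy => ?_) (fun t ht => ?_) (fun y hy => ?_)
  · rw [Finset.mem_filter] at ht ⊢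
    obtain ⟨-, hl, hzw⟩ := ht
    obtain ⟨hw, hwp, hwm⟩ := t.2
    refine ⟨Finset.mem_univ _, ?_⟩
    push_neg
    refine ⟨?_, ?_, ?_⟩
    · rcases hzw with h | h
      · rw [show 2 * t.1.2.1 - z = t.1.2.1 - dd t.1.2.2 by rw [h]; ring]
        exact hwm
      · rw [show 2 * t.1.2.1 - z = t.1.2.1 + dd t.1.2.2 by rw [h]; ring]
        exact hwp
    · intro hyz
      have hwz : t.1.2.1 = z := by
        apply two_mul_inj
        linear_combination hyz
      rcases hzw with h | h
      · rw [hwz] at h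
        exact dd_ne_zero t.1.2.2 ((left_eq_add).mp h)
      · rw [hwz] at h
        have := (sub_eq_self).mp h.symm
        exact dd_ne_zero t.1.2.2 this
    · intro hynz
      apply hw
      apply two_mul_inj
      rw [mul_zero]
      linear_combination hynz
  · rw [Finset.mem_filter]
    refine ⟨Finset.mem_univ _, rfl, ?_⟩
    rw [Finset.mem_filter] at hy
    push_neg at hy
    obtain ⟨-, hy0, hyz, hynz⟩ := hy
    have he : hf (z - y) ≠ 0 := hf_ne_zero (sub_ne_zero.mpr (Ne.symm hyz))
    have hsum : hf (z + y) + hf (z - y) = z := by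
      rw [hf_add, show (z + y) + (z - y) = 2*z by ring, hf_two_mul]
    rcases jsel_spec hk he with h | h
    · left
      show z = hf (z + y) + dd (jsel hk (hf (z - y)))
      rw [h, hsum]
    · right
      show z = hf (z + y) - dd (jsel hk (hf (z - y)))
      rw [h, show hf (z+y) - -hf (z-y) = hf (z+y) + hf (z-y) by ring, hsum]
  · rw [Finset.mem_filter] at ht
    obtain ⟨-, hl, hzw⟩ := ht
    apply Subtype.ext
    show (p.2, hf (z + (2 * t.1.2.1 - z)), jsel hk (hf (z - (2 * t.1.2.1 - z)))) = t.1
    refine Prod.ext hl (Prod.ext ?_ ?_)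
    · show hf (z + (2 * t.1.2.1 - z)) = t.1.2.1
      rw [show z + (2 * t.1.2.1 - z) = 2 * t.1.2.1 by ring, hf_two_mul]
    · show jsel hk (hf (z - (2 * t.1.2.1 - z))) = t.1.2.2
      rw [show z - (2 * t.1.2.1 - z) = 2 * (z - t.1.2.1) by ring, hf_two_mul]
      rcases hzw with h | h
      · rw [show z - t.1.2.1 = dd t.1.2.2 by rw [h]; ring]
        exact jsel_of_dd hk _
      · rw [show z - t.1.2.1 = -dd t.1.2.2 by rw [h]; ring]
        exact jsel_of_neg_dd hk _
  · show 2 * hf (z + y) - z = y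
    rw [two_mul_hf]
    ring

-- row sums
lemma rowSum (hk : 1 ≤ k) (r : Row k) : ∑ c : Col k, E r c = 3*k := by
  rw [Fintype.sum_sum_type, Fintype.sum_sum_type]
  rcases r with p | u
  · have h1 : ∑ c0 : Pt k, E (Sum.inl p) (Sum.inl c0) = 2 := by
      simp only [E_ll]
      rw [Finset.sum_ite_eq Finset.univ p (fun _ => 2)]
      simp
    have h2 : ∑ x : TI k, E (Sum.inl p) (Sum.inr (Sum.inl x)) = 1 := by
      simp only [E_lr, memT, memI]
      rw [Finset.sum_ite_eq Finset.univ p.1 (fun _ => 1)]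
      simp
    have h3 : ∑ t : TII k, E (Sum.inl p) (Sum.inr (Sum.inr t)) = 3*k - 3 := by
      simp only [E_lr, memT]
      rw [Finset.sum_boole]
      have hsplit : (Finset.univ.filter fun t : TII k => memII p t)
          = (Finset.univ.filter fun t : TII k =>
              p.2 = t.1.1 ∧ ((p.1 : Z k) = t.1.2.1 + dd t.1.2.2 ∨
                (p.1 : Z k) = t.1.2.1 - dd t.1.2.2))
            ∪ (Finset.univ.filter fun t : TII k =>
              p.2 = t.1.1 + 1 ∧ (p.1 : Z k) = t.1.2.1) := by
        rw [← Finset.filter_or]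
        rfl
      rw [hsplit, Finset.card_union_of_disjoint, cardA hk p, cardB hk p]
      · have : 2*k - 2 + (k - 1) = 3*k - 3 := by omega
        rw [this]
        norm_num
      · rw [Finset.disjoint_left]
        rintro t ht1 ht2
        rw [Finset.mem_filter] at ht1 ht2
        have h4 : t.1.1 = t.1.1 + 1 := ht1.2.1.symm.trans ht2.2.1
        exact one_ne_zero (left_eq_add.mp h4)
    rw [h1, h2, h3]
    omega
  · have h1 : ∑ c0 : Pt k, E (Sum.inr u) (Sum.inl c0) = 3*k := by
      simp only [E_rl]
      have : ∀ c0 : Pt k, (if g c0 = u then (1:ℕ) else 0) = if (fun q => g q = u) c0 then 1 else 0 :=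
        fun _ => rfl
      rw [Finset.sum_boole]
      rw [gfiber hk u]
      norm_num
    have h2 : ∑ x : TI k, E (Sum.inr u) (Sum.inr (Sum.inl x)) = 0 := by
      simp only [E_rr]
      exact Finset.sum_const_zero
    have h3 : ∑ t : TII k, E (Sum.inr u) (Sum.inr (Sum.inr t)) = 0 := by
      simp only [E_rr]
      exact Finset.sum_const_zero
    rw [h1, h2, h3]
    omega


-- cardinalities
lemma card_ne_zero' : Fintype.card {x : Z k // x ≠ 0} = 2*k := by
  rw [Fintype.card_subtype]
  rw [Finset.filter_ne']
  rw [Finset.card_erase_of_mem (Finset.mem_univ _), Finset.card_univ, ZMod.card]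
  omega

lemma card_Pt : Fintype.card (Pt k) = 6*k := by
  rw [Fintype.card_prod, card_ne_zero', ZMod.card]
  omega

lemma card_Row : Fintype.card (Row k) = 6*k + 2 := by
  rw [Fintype.card_sum, card_Pt, Fintype.card_fin]

instance : DecidableEq (Row k × Col k) := instDecidableEqProd

-- the set of entries equal to 2
lemma twosFilter :
    (Finset.univ.filter fun q : Row k × Col k => E q.1 q.2 = 2)
      = Finset.univ.image (fun p : Pt k => ((Sum.inl p : Row k), (Sum.inl p : Col k))) := by
  ext q
  simp only [Finset.mem_filter, Finset.mem_univ, true_and, Finset.mem_image]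
  constructor
  · intro hq
    obtain ⟨p, h1, h2⟩ := E_two (le_of_eq hq.symm)
    exact ⟨p, Prod.ext h1.symm h2.symm⟩
  · rintro ⟨p, -, rfl⟩
    show E (Sum.inl p) (Sum.inl p) = 2
    rw [E_ll, if_pos rfl]

lemma twosCard :
    (Finset.univ.filter fun q : Row k × Col k => E q.1 q.2 = 2).card = 6*k := by
  rw [twosFilter, Finset.card_image_of_injective _ ?inj, Finset.card_univ, card_Pt]
  case inj =>
    intro a b hab
    exact Sum.inl.inj (congrArg Prod.fst hab)

-- total sum identity: determines L
lemma colCount (hk : 1 ≤ k) :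
    Fintype.card (Col k) * 3 = (6*k+2) * (3*k) := by
  have h1 : ∑ c : Col k, ∑ r : Row k, E r c = Fintype.card (Col k) * 3 := by
    rw [Finset.sum_congr rfl (fun c _ => colSum c), Finset.sum_const, Finset.card_univ,
      smul_eq_mul]
  have h2 : ∑ r : Row k, ∑ c : Col k, E r c = (6*k+2) * (3*k) := by
    rw [Finset.sum_congr rfl (fun r _ => rowSum hk r), Finset.sum_const, Finset.card_univ,
      card_Row, smul_eq_mul]
  rw [← h1, ← h2, Finset.sum_comm]


-- pattern avoidance
lemma avoid (hk : 1 ≤ k) {J L : ℕ} (eR : Row k ≃ Fin J) (eC : Col k ≃ Fin L) :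
    avoidsLt14 (fun i l => E (eR.symm i) (eC.symm l)) := by
  have key : ∀ {m n' : ℕ} {Q : Matrix (Fin m) (Fin n') ℕ},
      containsSub (fun i l => E (eR.symm i) (eC.symm l)) Q →
      ∃ (r : Fin m → Row k) (c : Fin n' → Col k),
        Function.Injective r ∧ Function.Injective c ∧ ∀ i j, Q i j ≤ E (r i) (c j) := by
    intro m n' Q hcon
    unfold containsSub at hcon
    obtain ⟨r, c, hr, hc, h⟩ := hcon
    exact ⟨fun i => eR.symm (r i), fun j => eC.symm (c j),
      eR.symm.injective.comp hr, eC.symm.injective.comp hc, h⟩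
  -- shared cores
  have core10 : ∀ (r : Fin 2 → Row k) (c : Fin 2 → Col k),
      Function.Injective r → Function.Injective c →
      2 ≤ E (r 0) (c 0) → 1 ≤ E (r 0) (c 1) → 1 ≤ E (r 1) (c 0) → 1 ≤ E (r 1) (c 1) →
      False := by
    intro r c hr hc h00 h01 h10 h11
    obtain ⟨p, hp1, hp2⟩ := E_two h00
    rw [hp2] at h10
    rcases E_one_2col h10 with hcase | hcase
    · exact absurd (hr (hp1.trans hcase.symm)) (by decide)
    · cases hc1 : c 1 with
      | inl d =>
        rw [hp1, hc1] at h01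
        have hpd := E_one_2row2col h01
        have : c 0 = c 1 := by rw [hp2, hc1, hpd]
        exact absurd (hc this) (by decide)
      | inr t =>
        rw [hcase, hc1, E_rr] at h11
        omega
  refine ⟨⟨⟨?_, ?_⟩, ?_⟩, ?_, ?_, ?_⟩
  · -- pat6
    intro hcon
    unfold containsPat at hcon
    rcases hcon with hcon | hcon <;>
    · obtain ⟨r, c, hr, hc, h⟩ := key hcon
      have h0 := h 0 0
      have h1 := E_le_two (r 0) (c 0)
      have h2 : (3:ℕ) ≤ E (r 0) (c 0) := le_trans (by decide) h0
      omega
  · -- pat8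
    intro hcon
    unfold containsPat at hcon
    rcases hcon with hcon | hcon
    · obtain ⟨r, c, hr, hc, h⟩ := key hcon
      obtain ⟨p, hp1, hp2⟩ := E_two (le_trans (by decide : (2:ℕ) ≤ pat8 0 0) (h 0 0))
      obtain ⟨q, hq1, hq2⟩ := E_two (le_trans (by decide : (2:ℕ) ≤ pat8 0 1) (h 0 1))
      have hpq : p = q := Sum.inl.inj (hp1.symm.trans hq1)
      have hcc : c 0 = c 1 := by rw [hp2, hq2, hpq]
      exact absurd (hc hcc) (by decide)
    · obtain ⟨r, c, hr, hc, h⟩ := key hcon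
      obtain ⟨p, hp1, hp2⟩ := E_two (le_trans (by decide : (2:ℕ) ≤ pat8ᵀ 0 0) (h 0 0))
      obtain ⟨q, hq1, hq2⟩ := E_two (le_trans (by decide : (2:ℕ) ≤ pat8ᵀ 1 0) (h 1 0))
      have hpq : p = q := Sum.inl.inj (hp2.symm.trans hq2)
      have hrr : r 0 = r 1 := by rw [hp1, hq1, hpq]
      exact absurd (hr hrr) (by decide)
  · -- pat10
    intro hcon
    unfold containsPat at hcon
    rcases hcon with hcon | hcon
    · obtain ⟨r, c, hr, hc, h⟩ := key hcon
      exact core10 r c hr hc (le_trans (by decide : (2:ℕ) ≤ pat10 0 0) (h 0 0))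
        (le_trans (by decide : (1:ℕ) ≤ pat10 0 1) (h 0 1))
        (le_trans (by decide : (1:ℕ) ≤ pat10 1 0) (h 1 0))
        (le_trans (by decide : (1:ℕ) ≤ pat10 1 1) (h 1 1))
    · obtain ⟨r, c, hr, hc, h⟩ := key hcon
      exact core10 r c hr hc (le_trans (by decide : (2:ℕ) ≤ pat10ᵀ 0 0) (h 0 0))
        (le_trans (by decide : (1:ℕ) ≤ pat10ᵀ 0 1) (h 0 1))
        (le_trans (by decide : (1:ℕ) ≤ pat10ᵀ 1 0) (h 1 0))
        (le_trans (by decide : (1:ℕ) ≤ pat10ᵀ 1 1) (h 1 1))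
  · -- pat12a
    intro hcon
    unfold containsPat at hcon
    rcases hcon with hcon | hcon
    · obtain ⟨r, c, hr, hc, h⟩ := key hcon
      obtain ⟨p, hp1, hp2⟩ := E_two (le_trans (by decide : (2:ℕ) ≤ pat12a 0 0) (h 0 0))
      obtain ⟨q, hq1, hq2⟩ := E_two (le_trans (by decide : (2:ℕ) ≤ pat12a 1 1) (h 1 1))
      have h01 := le_trans (by decide : (1:ℕ) ≤ pat12a 0 1) (h 0 1)
      rw [hp1, hq2] at h01
      have hpq := E_one_2row2col h01
      have hcc : c 0 = c 1 := by rw [hp2, hq2, hpq]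
      exact absurd (hc hcc) (by decide)
    · obtain ⟨r, c, hr, hc, h⟩ := key hcon
      obtain ⟨p, hp1, hp2⟩ := E_two (le_trans (by decide : (2:ℕ) ≤ pat12aᵀ 0 0) (h 0 0))
      obtain ⟨q, hq1, hq2⟩ := E_two (le_trans (by decide : (2:ℕ) ≤ pat12aᵀ 1 1) (h 1 1))
      have h10 := le_trans (by decide : (1:ℕ) ≤ pat12aᵀ 1 0) (h 1 0)
      rw [hq1, hp2] at h10
      have hqp := E_one_2row2col h10
      have hrr : r 0 = r 1 := by rw [hp1, hq1, hqp]
      exact absurd (hr hrr) (by decide)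
  · -- pat12b
    intro hcon
    unfold containsPat at hcon
    rcases hcon with hcon | hcon
    · obtain ⟨r, c, hr, hc, h⟩ := key hcon
      obtain ⟨p, hp1, hp2⟩ := E_two (le_trans (by decide : (2:ℕ) ≤ pat12b 0 0) (h 0 0))
      have h01 := le_trans (by decide : (1:ℕ) ≤ pat12b 0 1) (h 0 1)
      have h02 := le_trans (by decide : (1:ℕ) ≤ pat12b 0 2) (h 0 2)
      have h11 := le_trans (by decide : (1:ℕ) ≤ pat12b 1 1) (h 1 1)
      have h12 := le_trans (by decide : (1:ℕ) ≤ pat12b 1 2) (h 1 2)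
      have htrip : ∀ jj : Fin 3, jj ≠ 0 → 1 ≤ E (Sum.inl p) (c jj) →
          ∃ t, c jj = Sum.inr t ∧ memT p t := by
        intro jj hjj hE
        cases hcj : c jj with
        | inl d =>
          rw [hcj] at hE
          have hpd := E_one_2row2col hE
          exact absurd (hc (show c jj = c 0 by rw [hcj, hp2, hpd])) hjj
        | inr t =>
          rw [hcj] at hE
          exact ⟨t, rfl, E_one_trip hE⟩
      rw [hp1] at h01 h02
      obtain ⟨t1, hct1, hmt1⟩ := htrip 1 (by decide) h01
      obtain ⟨t2, hct2, hmt2⟩ := htrip 2 (by decide) h02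
      cases hr1 : r 1 with
      | inr u =>
        rw [hr1, hct1, E_rr] at h11
        omega
      | inl q =>
        rw [hr1, hct1] at h11
        rw [hr1, hct2] at h12
        have hq1 := E_one_trip h11
        have hq2 := E_one_trip h12
        have hpq : p ≠ q := by
          intro hh
          exact absurd (hr (show r 0 = r 1 by rw [hp1, hr1, hh])) (by decide)
        have ht12 : t1 = t2 := linearity hk hpq hmt1 hq1 hmt2 hq2
        have hcc : c 1 = c 2 := by rw [hct1, hct2, ht12]
        exact absurd (hc hcc) (by decide)
    · obtain ⟨r, c, hr, hc, h⟩ := key hcon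
      obtain ⟨p, hp1, hp2⟩ := E_two (le_trans (by decide : (2:ℕ) ≤ pat12bᵀ 0 0) (h 0 0))
      have h10 := le_trans (by decide : (1:ℕ) ≤ pat12bᵀ 1 0) (h 1 0)
      have h20 := le_trans (by decide : (1:ℕ) ≤ pat12bᵀ 2 0) (h 2 0)
      rw [hp2] at h10 h20
      rcases E_one_2col h10 with hA | hA
      · exact absurd (hr (hp1.trans hA.symm)) (by decide)
      rcases E_one_2col h20 with hB | hB
      · exact absurd (hr (hp1.trans hB.symm)) (by decide)
      · exact absurd (hr (hA.trans hB.symm)) (by decide)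
  · -- pat12c
    intro hcon
    unfold containsPat at hcon
    rcases hcon with hcon | hcon
    · obtain ⟨r, c, hr, hc, h⟩ := key hcon
      have hall : ∀ (i : Fin 2) (j : Fin 3), 1 ≤ E (r i) (c j) := by
        intro i j
        refine le_trans ?_ (h i j)
        fin_cases i <;> fin_cases j <;> decide
      cases hr0 : r 0 with
      | inl p =>
        cases hr1 : r 1 with
        | inl q =>
          have hpq : p ≠ q := by
            intro hh
            exact absurd (hr (show r 0 = r 1 by rw [hr0, hr1, hh])) (by decide)
          have hcol : ∀ jj : Fin 3, ∃ t, c jj = Sum.inr t ∧ memT p t ∧ memT q t := by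
            intro jj
            have e0 := hall 0 jj
            have e1 := hall 1 jj
            rw [hr0] at e0
            rw [hr1] at e1
            cases hcj : c jj with
            | inl d =>
              rw [hcj] at e0 e1
              exact absurd ((E_one_2row2col e0).trans (E_one_2row2col e1).symm) hpq
            | inr t =>
              rw [hcj] at e0 e1
              exact ⟨t, rfl, E_one_trip e0, E_one_trip e1⟩
          obtain ⟨t0, hct0, hm0, hm0'⟩ := hcol 0
          obtain ⟨t1, hct1, hm1, hm1'⟩ := hcol 1
          have ht : t0 = t1 := linearity hk hpq hm0 hm0' hm1 hm1'
          exact absurd (hc (show c 0 = c 1 by rw [hct0, hct1, ht])) (by decide)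
        | inr u =>
          have hj : ∀ jj : Fin 3, c jj = Sum.inl p := by
            intro jj
            have e1 := hall 1 jj
            rw [hr1] at e1
            obtain ⟨d, hd1, hd2⟩ := E_one_clean e1
            have e0 := hall 0 jj
            rw [hr0, hd1] at e0
            rw [hd1, ← E_one_2row2col e0]
          exact absurd (hc ((hj 0).trans (hj 1).symm)) (by decide)
      | inr u =>
        cases hr1 : r 1 with
        | inl q =>
          have hj : ∀ jj : Fin 3, c jj = Sum.inl q := by
            intro jj
            have e0 := hall 0 jj
            rw [hr0] at e0
            obtain ⟨d, hd1, hd2⟩ := E_one_clean e0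
            have e1 := hall 1 jj
            rw [hr1, hd1] at e1
            rw [hd1, ← E_one_2row2col e1]
          exact absurd (hc ((hj 0).trans (hj 1).symm)) (by decide)
        | inr u' =>
          have e0 := hall 0 0
          have e1 := hall 1 0
          rw [hr0] at e0
          rw [hr1] at e1
          obtain ⟨d, hd1, hd2⟩ := E_one_clean e0
          obtain ⟨d', hd1', hd2'⟩ := E_one_clean e1
          have hdd : d = d' := Sum.inl.inj (hd1.symm.trans hd1')
          have huu : u = u' := by rw [← hd2, hdd, hd2']
          exact absurd (hr (show r 0 = r 1 by rw [hr0, hr1, huu])) (by decide)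
    · obtain ⟨r, c, hr, hc, h⟩ := key hcon
      have hall : ∀ (i : Fin 3) (j : Fin 2), 1 ≤ E (r i) (c j) := by
        intro i j
        refine le_trans ?_ (h i j)
        fin_cases i <;> fin_cases j <;> decide
      cases hc0 : c 0 with
      | inl d =>
        have g0 := E_one_2col (hc0 ▸ hall 0 0)
        have g1 := E_one_2col (hc0 ▸ hall 1 0)
        have g2 := E_one_2col (hc0 ▸ hall 2 0)
        rcases g0 with g0 | g0 <;> rcases g1 with g1 | g1 <;> rcases g2 with g2 | g2 <;>
          first
          | exact absurd (hr (g0.trans g1.symm)) (by decide)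
          | exact absurd (hr (g0.trans g2.symm)) (by decide)
          | exact absurd (hr (g1.trans g2.symm)) (by decide)
      | inr t =>
        have hrow : ∀ ii : Fin 3, ∃ p, r ii = Sum.inl p ∧ memT p t := by
          intro ii
          have e := hall ii 0
          rw [hc0] at e
          cases hri : r ii with
          | inl p =>
            rw [hri] at e
            exact ⟨p, rfl, E_one_trip e⟩
          | inr u =>
            rw [hri, E_rr] at e
            omega
        obtain ⟨p0, hp0, hm0⟩ := hrow 0
        obtain ⟨p1, hp1, hm1⟩ := hrow 1
        have hpq : p0 ≠ p1 := by
          intro hh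
          exact absurd (hr (show r 0 = r 1 by rw [hp0, hp1, hh])) (by decide)
        cases hc1 : c 1 with
        | inl d =>
          have e0 := hall 0 1
          have e1 := hall 1 1
          rw [hp0, hc1] at e0
          rw [hp1, hc1] at e1
          exact hpq ((E_one_2row2col e0).trans (E_one_2row2col e1).symm)
        | inr t' =>
          have e0 := hall 0 1
          have e1 := hall 1 1
          rw [hp0, hc1] at e0
          rw [hp1, hc1] at e1
          have ht : t = t' := linearity hk hpq hm0 hm1 (E_one_trip e0) (E_one_trip e1)
          exact absurd (hc (show c 0 = c 1 by rw [hc0, hc1, ht])) (by decide)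

end Stmt12

theorem stmt_12 (J : ℕ) (hmod : J % 6 = 2) (hJ : 14 ≤ J) :
    ∃ (L : ℕ) (P : Matrix (Fin J) (Fin L) ℕ),
      6 * L = J * (J - 2) ∧
      protoRegular P 3 ((J - 2) / 2) ∧
      numTwos P = J - 2 ∧
      avoidsLt14 P := by
  obtain ⟨k, rfl⟩ : ∃ k, J = 6*k+2 := ⟨J/6, by omega⟩
  have hk : 1 ≤ k := by omega
  have hcR : Fintype.card (Stmt12.Row k) = 6*k+2 := Stmt12.card_Row
  let eR : Stmt12.Row k ≃ Fin (6*k+2) := Fintype.equivFinOfCardEq hcR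
  let eC : Stmt12.Col k ≃ Fin (Fintype.card (Stmt12.Col k)) := Fintype.equivFin _
  refine ⟨Fintype.card (Stmt12.Col k), fun i l => Stmt12.E (eR.symm i) (eC.symm l),
    ?_, ⟨?_, ?_⟩, ?_, Stmt12.avoid hk eR eC⟩
  · have h3 := Stmt12.colCount (k := k) hk
    have h2 : (6*k+2) - 2 = 6*k := by omega
    rw [h2]
    calc 6 * Fintype.card (Stmt12.Col k) = (Fintype.card (Stmt12.Col k) * 3) * 2 := by ring
      _ = ((6*k+2) * (3*k)) * 2 := by rw [h3]
      _ = (6*k+2) * (6*k) := by ring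
  · intro l
    exact (Equiv.sum_comp eR.symm (fun rr => Stmt12.E rr (eC.symm l))).trans (Stmt12.colSum _)
  · intro j
    have h2 : ((6*k+2) - 2)/2 = 3*k := by omega
    rw [h2]
    exact (Equiv.sum_comp eC.symm (fun cc => Stmt12.E (eR.symm j) cc)).trans
      (Stmt12.rowSum hk _)
  · have h2 : (6*k+2) - 2 = 6*k := by omega
    rw [h2]
    unfold numTwos
    refine Eq.trans ?_ (Stmt12.twosCard (k := k))
    apply Finset.card_equiv (Equiv.prodCongr eR.symm eC.symm)
    intro q
    simp [Finset.mem_filter]
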